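/- Let M be an n×n matrix over a commutative ring R and y an indeterminate commuting with R. Then det(M + yJ) = det(M) + y·cof(M), where J is the all-ones matrix and cof(M) = Σ_{i,j} (-1)^{i+j} det(M_{i,j}) is the sum of all cofactors of M (M_{i,j} being M with row i and column j deleted). -/

import Mathlib

open Matrix Polynomial

/-- det(M + yJ) = det(M) + y·cof(M), with y an indeterminate commuting with R. -/
theorem stmt_0 {R : Type*} [CommRing R] {n : ℕ} (M : Matrix (Fin (n + 1)) (Fin (n + 1)) R) :
    (M.map Polynomial.C + Matrix.of fun _ _ => (Polynomial.X : R[X])).det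
      = Polynomial.C M.det + Polynomial.X *
          Polynomial.C (∑ i : Fin (n + 1), ∑ j : Fin (n + 1),
            (-1 : R) ^ ((i : ℕ) + (j : ℕ)) * (M.submatrix i.succAbove j.succAbove).det) := by
  classical
  have h0 : (M.map Polynomial.C + Matrix.of fun _ _ => (Polynomial.X : R[X])).det
      = (Matrix.detRowAlternating : (Fin (n+1) → R[X]) [⋀^Fin (n+1)]→ₗ[R[X]] R[X])
          ((fun i j => Polynomial.C (M i j)) + fun _ _ => (Polynomial.X : R[X])) := rfl
  have h1 := (Matrix.detRowAlternating :
      (Fin (n+1) → R[X]) [⋀^Fin (n+1)]→ₗ[R[X]] R[X]).toMultilinearMap.map_add_univ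
      (fun i j => Polynomial.C (M i j)) (fun _ _ => (Polynomial.X : R[X]))
  simp only [AlternatingMap.coe_multilinearMap] at h1
  rw [h0, h1]
  set a : Fin (n+1) → Fin (n+1) → R[X] := fun i j => Polynomial.C (M i j) with ha
  set b : Fin (n+1) → Fin (n+1) → R[X] := fun _ _ => (Polynomial.X : R[X]) with hb
  set f := (Matrix.detRowAlternating : (Fin (n+1) → R[X]) [⋀^Fin (n+1)]→ₗ[R[X]] R[X]) with hf
  set T : Finset (Finset (Fin (n+1))) :=
    insert Finset.univ (Finset.univ.image fun i : Fin (n+1) => ({i}ᶜ : Finset (Fin (n+1)))) with hT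
  have hsub : T ⊆ Finset.univ := Finset.subset_univ _
  rw [← Finset.sum_subset hsub]
  · have hnotmem : Finset.univ ∉
        Finset.univ.image fun i : Fin (n+1) => ({i}ᶜ : Finset (Fin (n+1))) := by
      simp only [Finset.mem_image, Finset.mem_univ, true_and]
      rintro ⟨i, hi⟩
      have : i ∈ ({i}ᶜ : Finset (Fin (n+1))) := hi ▸ Finset.mem_univ i
      simp at this
    rw [hT, Finset.sum_insert hnotmem]
    have hinj : ∀ x ∈ Finset.univ, ∀ y ∈ Finset.univ,
        ({x}ᶜ : Finset (Fin (n+1))) = ({y}ᶜ : Finset (Fin (n+1))) → x = y := by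
      intro x _ y _ h
      have := compl_injective h
      simpa using this
    rw [Finset.sum_image hinj]
    congr 1
    · rw [Finset.piecewise_univ]
      have : f a = (M.map Polynomial.C).det := rfl
      rw [this]
      exact (RingHom.map_det Polynomial.C M).symm
    · have hrow : ∀ i : Fin (n+1), (({i}ᶜ : Finset (Fin (n+1)))).piecewise a b
          = Matrix.updateRow (M.map Polynomial.C) i (fun _ => (Polynomial.X : R[X])) := by
        intro i
        funext k j
        by_cases hk : k = i
        · subst hk
          rw [Finset.piecewise_eq_of_notMem _ _ _ (by simp)]
          rw [Matrix.updateRow_self]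
        · rw [Finset.piecewise_eq_of_mem _ _ _ (by simp [hk]),
            Matrix.updateRow_ne hk]
          rfl
      have hterm : ∀ i : Fin (n+1), f (({i}ᶜ : Finset (Fin (n+1))).piecewise a b)
          = ∑ j : Fin (n+1), (-1 : R[X]) ^ ((i : ℕ) + (j : ℕ)) * Polynomial.X *
              Polynomial.C ((M.submatrix i.succAbove j.succAbove).det) := by
        intro i
        rw [hrow i]
        have h1 : f (Matrix.updateRow (M.map Polynomial.C) i fun _ => (Polynomial.X : R[X]))
            = (Matrix.updateRow (M.map Polynomial.C) i fun _ => (Polynomial.X : R[X])).det := rfl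
        rw [h1, Matrix.det_succ_row _ i]
        refine Finset.sum_congr rfl fun j _ => ?_
        rw [Matrix.submatrix_updateRow_succAbove]
        congr 1
        · simp
        · rw [Matrix.submatrix_map]
          exact (RingHom.map_det Polynomial.C _).symm
      rw [Finset.sum_congr rfl fun i _ => hterm i]
      rw [map_sum Polynomial.C _ Finset.univ, Finset.mul_sum]
      refine Finset.sum_congr rfl fun i _ => ?_
      rw [map_sum Polynomial.C _ Finset.univ, Finset.mul_sum]
      refine Finset.sum_congr rfl fun j _ => ?_
      rw [_root_.map_mul, map_pow, map_neg, _root_.map_one]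
      ring
  · intro s _ hs
    have hs1 : ∀ i : Fin (n+1), s ≠ ({i}ᶜ : Finset (Fin (n+1))) := by
      intro i h
      exact hs (Finset.mem_insert_of_mem (Finset.mem_image.2 ⟨i, Finset.mem_univ i, h.symm⟩))
    have hsu : s ≠ Finset.univ := by rintro rfl; exact hs (Finset.mem_insert_self _ _)
    have hne : (sᶜ : Finset (Fin (n+1))).Nonempty := by
      rw [Finset.nonempty_iff_ne_empty]
      intro h
      exact hsu (by simpa using congrArg (Compl.compl : Finset (Fin (n+1)) → Finset (Fin (n+1))) h)
    obtain ⟨i, hi⟩ := hne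
    have hexj : ∃ j ∈ (sᶜ : Finset (Fin (n+1))), j ≠ i := by
      by_contra h
      push_neg at h
      apply hs1 i
      have hc : (sᶜ : Finset (Fin (n+1))) = {i} :=
        Finset.eq_singleton_iff_unique_mem.2 ⟨hi, h⟩
      rw [← _root_.compl_compl s, hc]
    obtain ⟨j, hj, hji⟩ := hexj
    apply f.map_eq_zero_of_eq _ _ hji
    rw [Finset.piecewise_eq_of_notMem _ _ _ (Finset.mem_compl.1 hj),
      Finset.piecewise_eq_of_notMem _ _ _ (Finset.mem_compl.1 hi)]
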